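/- Let μ be the Lie bracket on ℝ^7 with nonzero basis brackets [e1,e2]=e3, [e1,e3]=e4, [e1,e4]=e5, [e1,e6]=e7, [e2,e3]=e6, [e2,e4]=e7, [e2,e5]=e7, [e3,e4]=-e7. Then φ = (2/3)·diag(0,1,1,1,1,2,2) is a derivation of (ℝ^7,μ) and φ is pre-Einstein, i.e. trace(φ∘ψ) = trace(ψ) for every derivation ψ of (ℝ^7,μ). -/
import Mathlib


open Finset

noncomputable section

/-- `ℝ⁷` with its standard basis and standard inner product. -/
abbrev V7 : Type := Fin 7 → ℝ

/-- The standard basis vector `e i`. -/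
def e (i : Fin 7) : V7 := Pi.single i 1

/-- The standard inner product on `ℝ⁷`. -/
def dot (x y : V7) : ℝ := ∑ i, x i * y i

/-- Structure constants built from a list of entries `(i, j, k, a)`, each meaning that
`μ (e i) (e j)` has component `a` along `e k` (and `μ (e j) (e i)` has component `-a`);
all unlisted basis brackets are `0`. -/
def toC (L : List (Fin 7 × Fin 7 × Fin 7 × ℝ)) (i j k : Fin 7) : ℝ :=
  (L.map fun t =>
      (if t.1 = i ∧ t.2.1 = j ∧ t.2.2.1 = k then t.2.2.2 else 0)
    - (if t.1 = j ∧ t.2.1 = i ∧ t.2.2.1 = k then t.2.2.2 else 0)).sum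

/-- The bilinear skew-symmetric map on `ℝ⁷` with structure constants `c`. -/
def br (c : Fin 7 → Fin 7 → Fin 7 → ℝ) (x y : V7) : V7 :=
  fun k => ∑ i, ∑ j, x i * y j * c i j k

lemma br_add_left (c : Fin 7 → Fin 7 → Fin 7 → ℝ) (x x' y : V7) :
    br c (x + x') y = br c x y + br c x' y := by
  funext k
  simp only [br, Pi.add_apply, ← Finset.sum_add_distrib]
  exact Finset.sum_congr rfl fun i _ => Finset.sum_congr rfl fun j _ => by ring

lemma br_smul_left (c : Fin 7 → Fin 7 → Fin 7 → ℝ) (r : ℝ) (x y : V7) :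
    br c (r • x) y = r • br c x y := by
  funext k
  simp only [br, Pi.smul_apply, smul_eq_mul, Finset.mul_sum]
  exact Finset.sum_congr rfl fun i _ => Finset.sum_congr rfl fun j _ => by ring

lemma br_add_right (c : Fin 7 → Fin 7 → Fin 7 → ℝ) (x y y' : V7) :
    br c x (y + y') = br c x y + br c x y' := by
  funext k
  simp only [br, Pi.add_apply, ← Finset.sum_add_distrib]
  exact Finset.sum_congr rfl fun i _ => Finset.sum_congr rfl fun j _ => by ring

lemma br_smul_right (c : Fin 7 → Fin 7 → Fin 7 → ℝ) (r : ℝ) (x y : V7) :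
    br c x (r • y) = r • br c x y := by
  funext k
  simp only [br, Pi.smul_apply, smul_eq_mul, Finset.mul_sum]
  exact Finset.sum_congr rfl fun i _ => Finset.sum_congr rfl fun j _ => by ring

lemma br_zero_left (c : Fin 7 → Fin 7 → Fin 7 → ℝ) (y : V7) : br c 0 y = 0 := by
  funext k; simp [br]

lemma br_zero_right (c : Fin 7 → Fin 7 → Fin 7 → ℝ) (x : V7) : br c x 0 = 0 := by
  funext k; simp [br]

/-- The space of derivations of the algebra `(ℝ⁷, br c)`, i.e. the linear maps `D` with
`D (μ x y) = μ (D x) y + μ x (D y)` for all `x, y`, as a submodule of the endomorphisms. -/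
def derivations (c : Fin 7 → Fin 7 → Fin 7 → ℝ) : Submodule ℝ (Module.End ℝ V7) where
  carrier := {D | ∀ x y, D (br c x y) = br c (D x) y + br c x (D y)}
  add_mem' := by
    intro D E hD hE x y
    simp only [LinearMap.add_apply, hD x y, hE x y, br_add_left, br_add_right]
    abel
  zero_mem' := by
    intro x y
    simp [br_zero_left, br_zero_right]
  smul_mem' := by
    intro r D hD x y
    simp only [LinearMap.smul_apply, hD x y, smul_add, br_smul_left, br_smul_right]

/-- The Jacobi identity for the bracket `br c`. -/
def Jacobi (c : Fin 7 → Fin 7 → Fin 7 → ℝ) : Prop :=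
  ∀ x y z : V7, br c (br c x y) z + br c (br c y z) x + br c (br c z x) y = 0

/-- Skew-symmetry of the bracket `br c`. -/
def Skew (c : Fin 7 → Fin 7 → Fin 7 → ℝ) : Prop :=
  ∀ x y : V7, br c x y = - br c y x

/-- The diagonal endomorphism `diag (a 1, …, a 7)` of `ℝ⁷`, `e i ↦ a i • e i`. -/
def diagL (a : Fin 7 → ℝ) : Module.End ℝ V7 :=
  LinearMap.pi fun i => a i • LinearMap.proj i

/-- Structure constants of the bracket with nonzero basis brackets
`[e1,e2]=e3, [e1,e3]=e4, [e1,e4]=e5, [e1,e6]=e7, [e2,e3]=e6, [e2,e4]=e7, [e2,e5]=e7,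
[e3,e4]=-e7`. -/
def c5 : Fin 7 → Fin 7 → Fin 7 → ℝ :=
  toC [(0, 1, 2, (1:ℝ)),
   (0, 2, 3, 1),
   (0, 3, 4, 1),
   (0, 5, 6, 1),
   (1, 2, 5, 1),
   (1, 3, 6, 1),
   (1, 4, 6, 1),
   (2, 3, 6, -1)]

def toCZ (L : List (Fin 7 × Fin 7 × Fin 7 × ℤ)) (i j k : Fin 7) : ℤ :=
  (L.map fun t =>
      (if t.1 = i ∧ t.2.1 = j ∧ t.2.2.1 = k then t.2.2.2 else 0)
    - (if t.1 = j ∧ t.2.1 = i ∧ t.2.2.1 = k then t.2.2.2 else 0)).sum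

def LZ : List (Fin 7 × Fin 7 × Fin 7 × ℤ) :=
  [(0, 1, 2, 1), (0, 2, 3, 1), (0, 3, 4, 1), (0, 5, 6, 1),
   (1, 2, 5, 1), (1, 3, 6, 1), (1, 4, 6, 1), (2, 3, 6, -1)]

def cZ : Fin 7 → Fin 7 → Fin 7 → ℤ := toCZ LZ

def bZ : Fin 7 → ℤ := ![0, 1, 1, 1, 1, 2, 2]

set_option maxRecDepth 10000 in
lemma derZ : ∀ i j k : Fin 7, bZ k * cZ i j k = (bZ i + bZ j) * cZ i j k := by decide

set_option maxRecDepth 100000 in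
lemma jacZ : ∀ i l j k : Fin 7,
    (∑ m, (cZ i l m * cZ m j k + cZ l j m * cZ m i k + cZ j i m * cZ m l k)) = 0 := by decide

lemma toC_cast (L : List (Fin 7 × Fin 7 × Fin 7 × ℤ)) (i j k : Fin 7) :
    toC (L.map fun t => (t.1, t.2.1, t.2.2.1, (t.2.2.2 : ℝ))) i j k = (toCZ L i j k : ℝ) := by
  induction L with
  | nil => simp [toC, toCZ]
  | cons h tL ih =>
    simp only [toC, toCZ, List.map_cons, List.sum_cons] at ih ⊢
    rw [ih]
    push_cast [apply_ite (fun z : ℤ => (z : ℝ))]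
    ring

lemma c5_cast (i j k : Fin 7) : c5 i j k = (cZ i j k : ℝ) := by
  have h : [(0, 1, 2, (1:ℝ)), (0, 2, 3, 1), (0, 3, 4, 1), (0, 5, 6, 1),
      (1, 2, 5, 1), (1, 3, 6, 1), (1, 4, 6, 1), (2, 3, 6, -1)]
      = LZ.map fun t => (t.1, t.2.1, t.2.2.1, ((t.2.2.2 : ℤ) : ℝ)) := by
    norm_num [LZ]
  rw [c5, h, toC_cast, cZ]

lemma toC_skew (L : List (Fin 7 × Fin 7 × Fin 7 × ℝ)) (i j k : Fin 7) :
    toC L i j k = - toC L j i k := by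
  induction L with
  | nil => simp [toC]
  | cons h tL ih =>
    simp only [toC, List.map_cons, List.sum_cons] at ih ⊢
    rw [ih]; ring

lemma skew_c5 : Skew c5 := by
  intro x y
  funext k
  simp only [br, Pi.neg_apply, ← Finset.sum_neg_distrib]
  rw [Finset.sum_comm]
  refine Finset.sum_congr rfl fun i _ => Finset.sum_congr rfl fun j _ => ?_
  rw [show c5 j i k = - c5 i j k from toC_skew _ _ _ _]
  ring

lemma sum4 (f : Fin 7 → Fin 7 → Fin 7 → Fin 7 → ℝ) :
    ∑ m, ∑ j, ∑ i, ∑ l, f m j i l = ∑ i, ∑ l, ∑ j, ∑ m, f m j i l :=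
  calc ∑ m, ∑ j, ∑ i, ∑ l, f m j i l
      = ∑ j, ∑ m, ∑ i, ∑ l, f m j i l := Finset.sum_comm
    _ = ∑ j, ∑ i, ∑ m, ∑ l, f m j i l := Finset.sum_congr rfl fun j _ => Finset.sum_comm
    _ = ∑ j, ∑ i, ∑ l, ∑ m, f m j i l :=
        Finset.sum_congr rfl fun j _ => Finset.sum_congr rfl fun i _ => Finset.sum_comm
    _ = ∑ i, ∑ j, ∑ l, ∑ m, f m j i l := Finset.sum_comm
    _ = ∑ i, ∑ l, ∑ j, ∑ m, f m j i l := Finset.sum_congr rfl fun i _ => Finset.sum_comm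

lemma br_br (c : Fin 7 → Fin 7 → Fin 7 → ℝ) (x y z : V7) (k : Fin 7) :
    br c (br c x y) z k = ∑ i, ∑ l, ∑ j, x i * y l * z j * ∑ m, c i l m * c m j k := by
  simp only [br, Finset.sum_mul, Finset.mul_sum]
  rw [sum4 (fun m j i l => x i * y l * c i l m * z j * c m j k)]
  refine Finset.sum_congr rfl fun i _ => Finset.sum_congr rfl fun l _ =>
    Finset.sum_congr rfl fun j _ => Finset.sum_congr rfl fun m _ => by ring

lemma sum3a (f : Fin 7 → Fin 7 → Fin 7 → ℝ) :
    ∑ i, ∑ l, ∑ j, f i l j = ∑ j, ∑ i, ∑ l, f i l j :=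
  calc ∑ i, ∑ l, ∑ j, f i l j
      = ∑ i, ∑ j, ∑ l, f i l j := Finset.sum_congr rfl fun i _ => Finset.sum_comm
    _ = ∑ j, ∑ i, ∑ l, f i l j := Finset.sum_comm

lemma sum3b (f : Fin 7 → Fin 7 → Fin 7 → ℝ) :
    ∑ i, ∑ l, ∑ j, f i l j = ∑ l, ∑ j, ∑ i, f i l j :=
  calc ∑ i, ∑ l, ∑ j, f i l j
      = ∑ l, ∑ i, ∑ j, f i l j := Finset.sum_comm
    _ = ∑ l, ∑ j, ∑ i, f i l j := Finset.sum_congr rfl fun l _ => Finset.sum_comm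

lemma jac_coeff (a b c k : Fin 7) :
    (∑ m, c5 a b m * c5 m c k) + (∑ m, c5 b c m * c5 m a k)
      + (∑ m, c5 c a m * c5 m b k) = 0 := by
  have h := jacZ a b c k
  have h2 : ((∑ m, (cZ a b m * cZ m c k + cZ b c m * cZ m a k + cZ c a m * cZ m b k) : ℤ) : ℝ)
      = 0 := by rw [h]; norm_num
  push_cast [Finset.sum_add_distrib] at h2
  simp only [c5_cast]
  linarith [h2]

lemma jacobi_c5 : Jacobi c5 := by
  intro x y z
  funext k
  simp only [Pi.add_apply, Pi.zero_apply]
  rw [br_br, br_br, br_br]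
  rw [sum3a (fun i l j => y i * z l * x j * ∑ m, c5 i l m * c5 m j k)]
  rw [sum3b (fun i l j => z i * x l * y j * ∑ m, c5 i l m * c5 m j k)]
  simp only [← Finset.sum_add_distrib]
  refine Finset.sum_eq_zero fun a _ => Finset.sum_eq_zero fun b _ =>
    Finset.sum_eq_zero fun c _ => ?_
  linear_combination (x a * y b * z c) * jac_coeff a b c k

lemma bR_cast (i : Fin 7) : (![0,1,1,1,1,2,2] : Fin 7 → ℝ) i = ((bZ i : ℤ) : ℝ) := by
  fin_cases i <;> norm_num [bZ]

lemma derR (i j k : Fin 7) : (![0,1,1,1,1,2,2] : Fin 7 → ℝ) k * c5 i j k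
    = ((![0,1,1,1,1,2,2] : Fin 7 → ℝ) i + (![0,1,1,1,1,2,2] : Fin 7 → ℝ) j) * c5 i j k := by
  simp only [bR_cast, c5_cast]
  exact_mod_cast derZ i j k

lemma phi_mem : ((2/3 : ℝ) • diagL ![0, 1, 1, 1, 1, 2, 2]) ∈ derivations c5 := by
  intro x y
  funext k
  simp only [LinearMap.smul_apply, diagL, LinearMap.pi_apply, LinearMap.proj_apply,
    Pi.smul_apply, smul_eq_mul, Pi.add_apply, br, Finset.mul_sum, ← Finset.sum_add_distrib]
  refine Finset.sum_congr rfl fun i _ => Finset.sum_congr rfl fun j _ => ?_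
  linear_combination (2/3 * x i * y j) * derR i j k

lemma trace_eq (ψ : Module.End ℝ V7) : LinearMap.trace ℝ V7 ψ = ∑ i, ψ (e i) i := by
  rw [LinearMap.trace_eq_matrix_trace ℝ (Pi.basisFun ℝ (Fin 7)), Matrix.trace]
  simp [Matrix.diag, LinearMap.toMatrix_apply, e]

lemma key (ψ : Module.End ℝ V7) (hψ : ψ ∈ derivations c5) :
    ∀ i j l : Fin 7, (∑ kk, c5 i j kk * ψ (e kk) l)
      = (∑ a, ψ (e i) a * c5 a j l) + ∑ a, ψ (e j) a * c5 i a l := by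
  intro i j l
  have hb : br c5 (e i) (e j) = ∑ kk, c5 i j kk • e kk := by
    funext m
    simp [br, e, Pi.single_apply, Finset.sum_apply, mul_ite, Finset.sum_ite_eq,
      Finset.sum_ite_eq']
  have h1 := congrFun (hψ (e i) (e j)) l
  rw [hb, map_sum] at h1
  simp only [map_smul, Finset.sum_apply, Pi.smul_apply, smul_eq_mul, Pi.add_apply, br, e,
    Pi.single_apply, mul_ite, mul_one, mul_zero, ite_mul, zero_mul, Finset.sum_ite_irrel,
    Finset.sum_const_zero, Finset.sum_ite_eq, Finset.sum_ite_eq', Finset.mem_univ,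
    if_true] at h1
  simpa [e] using h1

set_option maxHeartbeats 2000000 in
/-- The bracket satisfies the Jacobi identity (and is skew-symmetric), `φ` is a derivation
of it, and `φ` is pre-Einstein: `trace (φ ∘ ψ) = trace ψ` for every derivation `ψ`. -/
theorem stmt :
    Skew c5 ∧ Jacobi c5 ∧
    ((2/3 : ℝ) • diagL ![0, 1, 1, 1, 1, 2, 2]) ∈ derivations c5 ∧
    ∀ ψ ∈ derivations c5,
      LinearMap.trace ℝ V7 (((2/3 : ℝ) • diagL ![0, 1, 1, 1, 1, 2, 2]) ∘ₗ ψ) = LinearMap.trace ℝ V7 ψ := by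
  refine ⟨skew_c5, jacobi_c5, phi_mem, ?_⟩
  intro ψ hψ
  have h011 := key ψ hψ 0 1 1
  have h012 := key ψ hψ 0 1 2
  have h022 := key ψ hψ 0 2 2
  have h023 := key ψ hψ 0 2 3
  have h033 := key ψ hψ 0 3 3
  have h034 := key ψ hψ 0 3 4
  have h056 := key ψ hψ 0 5 6
  have h125 := key ψ hψ 1 2 5
  have h146 := key ψ hψ 1 4 6
  simp only [Fin.sum_univ_seven, c5_cast] at h011 h012 h022 h023 h033 h034 h056 h125 h146
  simp (config := { decide := true }) only [cZ, toCZ, LZ, List.map_cons, List.map_nil,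
    List.sum_cons, List.sum_nil, if_true,
    if_false] at h011 h012 h022 h023 h033 h034 h056 h125 h146
  norm_num at h011 h012 h022 h023 h033 h034 h056 h125 h146
  rw [trace_eq, trace_eq]
  simp only [LinearMap.comp_apply, LinearMap.smul_apply, diagL, LinearMap.pi_apply,
    LinearMap.proj_apply, Pi.smul_apply, smul_eq_mul, Fin.sum_univ_seven]
  simp only [bR_cast, show bZ 0 = 0 from by decide, show bZ 1 = 1 from by decide,
    show bZ 2 = 1 from by decide, show bZ 3 = 1 from by decide, show bZ 4 = 1 from by decide,
    show bZ 5 = 2 from by decide, show bZ 6 = 2 from by decide]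
  norm_num
  linear_combination 2*h011 - (1/3)*h012 + 2*h022 + (4/3)*h023 + 2*h033 + (5/3)*h034
    - (5/3)*h056 - (4/3)*h125 + 2*h146
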